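/- Orthogonal plane split modulus identity for quaternions: for every quaternion q ∈ ℍ, writing q₊ = (1/2)(q + i·q·j) and q₋ = (1/2)(q − i·q·j) (so q = q₊ + q₋), one has |q|² = |q₊|² + |q₋|². Moreover, for any two quaternions p, r ∈ ℍ, the scalar (real) part of r₊ · conj(p₋) vanishes: Sc(r₊ · conj(p₋)) = 0. -/

import Mathlib

noncomputable section

/-- The quaternion unit i. -/
def qI : Quaternion ℝ := ⟨0, 1, 0, 0⟩

/-- The quaternion unit j. -/
def qJ : Quaternion ℝ := ⟨0, 0, 1, 0⟩

/-- The "positive" part q₊ = (1/2)(q + i q j) of the orthogonal plane split. -/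
def opsPlus (q : Quaternion ℝ) : Quaternion ℝ := (1 / 2 : ℝ) • (q + qI * q * qJ)

/-- The "negative" part q₋ = (1/2)(q − i q j) of the orthogonal plane split. -/
def opsMinus (q : Quaternion ℝ) : Quaternion ℝ := (1 / 2 : ℝ) • (q - qI * q * qJ)

/-- Orthogonal plane split modulus identity: |q|² = |q₊|² + |q₋|², and for any two
quaternions p, r the scalar part of r₊ · conj(p₋) vanishes. -/
theorem ops_modulus_identity :
    (∀ q : Quaternion ℝ, ‖q‖ ^ 2 = ‖opsPlus q‖ ^ 2 + ‖opsMinus q‖ ^ 2) ∧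
      (∀ p r : Quaternion ℝ, (opsPlus r * star (opsMinus p)).re = 0) := by
  constructor
  · intro q
    simp only [sq, ← Quaternion.normSq_eq_norm_mul_self]
    simp only [Quaternion.normSq_def', opsPlus, opsMinus, Quaternion.re_mul,
      Quaternion.imI_mul, Quaternion.imJ_mul, Quaternion.imK_mul, Quaternion.re_add,
      Quaternion.imI_add, Quaternion.imJ_add, Quaternion.imK_add, Quaternion.re_sub,
      Quaternion.imI_sub, Quaternion.imJ_sub, Quaternion.imK_sub, Quaternion.re_smul,
      Quaternion.imI_smul, Quaternion.imJ_smul, Quaternion.imK_smul, smul_eq_mul]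
    simp only [qI, qJ]
    ring
  · intro p r
    simp only [opsPlus, opsMinus, Quaternion.re_mul, Quaternion.imI_mul,
      Quaternion.imJ_mul, Quaternion.imK_mul, Quaternion.re_add, Quaternion.imI_add,
      Quaternion.imJ_add, Quaternion.imK_add, Quaternion.re_sub, Quaternion.imI_sub,
      Quaternion.imJ_sub, Quaternion.imK_sub, Quaternion.re_smul, Quaternion.imI_smul,
      Quaternion.imJ_smul, Quaternion.imK_smul, Quaternion.re_star, Quaternion.imI_star,
      Quaternion.imJ_star, Quaternion.imK_star, smul_eq_mul]
    simp only [qI, qJ]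
    ring

end
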